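/- Let g : ℝⁿ → ℝ be differentiable with L-Lipschitz gradient, h₁ : ℝⁿ → ℝ ∪ {+∞} a proper lower semicontinuous convex function, h₂ : ℝⁿ → ℝ a continuous convex function, f = g + h₁ − h₂. Let x, x⁺ ∈ ℝⁿ with h₁(x) and h₁(x⁺) finite, d = x⁺ − x, ξ ∈ ∂h₂(x), B a symmetric matrix with m‖u‖² ≤ uᵀBu for all u (m > 0), θ̄ ∈ (0,1], δ ∈ (0,1), and suppose r ∈ ℝⁿ satisfies r − (∇g(x) − ξ) − B d ∈ ∂h₁(x⁺) and ‖r‖_{B⁻¹} ≤ (1 − θ̄)‖d‖_B. Then the backtracking line-search condition f(x + ηd) ≤ f(x) + δη((∇g(x) − ξ)ᵀd + h₁(x⁺) − h₁(x)) holds for every η with 0 < η ≤ min{1, (2m/L)θ̄(1 − δ)}. -/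

import Mathlib

open Matrix Filter Topology RealInnerProductSpace

noncomputable section

/-- `n`-dimensional Euclidean space. -/
abbrev Euc (n : ℕ) := EuclideanSpace ℝ (Fin n)

/-- `v` is a subgradient of the extended-real-valued convex function `φ` at `x`. -/
def ESubgradAt {n : ℕ} (φ : Euc n → EReal) (v x : Euc n) : Prop :=
  ∀ y : Euc n, φ x + ((⟪v, y - x⟫ : ℝ) : EReal) ≤ φ y

/-- `v` is a subgradient of the real-valued convex function `φ` at `x`. -/
def RSubgradAt {n : ℕ} (φ : Euc n → ℝ) (v x : Euc n) : Prop :=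
  ∀ y : Euc n, φ x + ⟪v, y - x⟫ ≤ φ y

/-- Convexity of an extended-real-valued function. -/
def EConvexF {n : ℕ} (φ : Euc n → EReal) : Prop :=
  ∀ x y : Euc n, ∀ a b : ℝ, 0 ≤ a → 0 ≤ b → a + b = 1 →
    φ (a • x + b • y) ≤ (a : EReal) * φ x + (b : EReal) * φ y

/-- Properness of an extended-real-valued function: never `⊥` and finite somewhere. -/
def ProperF {n : ℕ} (φ : Euc n → EReal) : Prop :=
  (∀ x, φ x ≠ ⊥) ∧ (∃ x, φ x ≠ ⊤)

/-- The quadratic form `uᵀ B u`. -/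
def quadF {n : ℕ} (B : Matrix (Fin n) (Fin n) ℝ) (u : Euc n) : ℝ :=
  ⟪u, (Matrix.toEuclideanLin B) u⟫

/-- The scaled norm `‖u‖_B = √(uᵀ B u)`. -/
def MNorm {n : ℕ} (B : Matrix (Fin n) (Fin n) ℝ) (u : Euc n) : ℝ :=
  Real.sqrt (quadF B u)

/-- The objective `f = g + h₁ - h₂`. -/
def fObj {n : ℕ} (g : Euc n → ℝ) (h₁ : Euc n → EReal) (h₂ : Euc n → ℝ) (x : Euc n) : EReal :=
  (g x : EReal) + h₁ x - (h₂ x : EReal)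

/-! ### Auxiliary lemmas -/

lemma quadF_eq_dot {n : ℕ} (B : Matrix (Fin n) (Fin n) ℝ) (u : Euc n) :
    quadF B u = (WithLp.equiv 2 _ u) ⬝ᵥ B *ᵥ (WithLp.equiv 2 _ u) := by
  simp [quadF, Matrix.toEuclideanLin_apply, PiLp.inner_apply, dotProduct, Matrix.mulVec, mul_comm]

lemma posdef_of_quad {n : ℕ} (B : Matrix (Fin n) (Fin n) ℝ) (m : ℝ) (hm : 0 < m)
    (hs : B.IsSymm) (hB : ∀ u : Euc n, m * ‖u‖ ^ 2 ≤ quadF B u) : B.PosDef := by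
  refine Matrix.PosDef.of_dotProduct_mulVec_pos ?_ ?_
  · rw [Matrix.IsHermitian, Matrix.conjTranspose]; exact hs
  · intro v hv
    have h2 := hB ((WithLp.equiv 2 _).symm v)
    rw [quadF_eq_dot] at h2
    simp only [WithLp.equiv_symm_apply] at h2 ⊢
    have hnv : (0:ℝ) < ‖(WithLp.equiv 2 (Fin n → ℝ)).symm v‖ := by
      rw [norm_pos_iff]
      simpa using hv
    have : (0:ℝ) < m * ‖(WithLp.equiv 2 (Fin n → ℝ)).symm v‖ ^ 2 := by positivity
    have := lt_of_lt_of_le this (by simpa using h2)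
    simpa [star] using this

lemma quadF_nonneg {n : ℕ} {B : Matrix (Fin n) (Fin n) ℝ} (hB : B.PosSemidef) (u : Euc n) :
    0 ≤ quadF B u := by
  rw [quadF_eq_dot]
  simpa [star] using hB.dotProduct_mulVec_nonneg (WithLp.equiv 2 _ u)

lemma toEuclideanLin_symm {n : ℕ} {B : Matrix (Fin n) (Fin n) ℝ} (hB : B.IsHermitian)
    (u v : Euc n) : ⟪(toEuclideanLin B) u, v⟫ = ⟪u, (toEuclideanLin B) v⟫ :=
  (Matrix.isHermitian_iff_isSymmetric.1 hB) u v

lemma toEuclideanLin_inv_apply {n : ℕ} {B : Matrix (Fin n) (Fin n) ℝ} (hB : B.PosDef)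
    (u : Euc n) : toEuclideanLin B⁻¹ (toEuclideanLin B u) = u := by
  have h1 : B⁻¹ * B = 1 := Matrix.nonsing_inv_mul B ((Matrix.isUnit_iff_isUnit_det B).1 hB.isUnit)
  have : toEuclideanLin (B⁻¹ * B) u = toEuclideanLin B⁻¹ (toEuclideanLin B u) := by
    simp [Matrix.toEuclideanLin_apply, Matrix.mulVec_mulVec]
  rw [← this, h1]
  simp [Matrix.toEuclideanLin_apply]

lemma quadF_pos {n : ℕ} {B : Matrix (Fin n) (Fin n) ℝ} (hB : B.PosDef) {d : Euc n}
    (hd : d ≠ 0) : 0 < quadF B d := by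
  rw [quadF_eq_dot]
  have hne : (WithLp.equiv 2 (Fin n → ℝ)) d ≠ 0 := by
    intro h
    exact hd ((WithLp.equiv 2 _).injective (by simpa using h))
  simpa [star] using hB.dotProduct_mulVec_pos hne

lemma quadF_expand {n : ℕ} {B : Matrix (Fin n) (Fin n) ℝ} (hB : B.PosDef)
    (r d : Euc n) (t : ℝ) :
    quadF B⁻¹ (r - t • (toEuclideanLin B d)) =
      quadF B⁻¹ r - 2 * t * ⟪r, d⟫ + t ^ 2 * quadF B d := by
  have hinv : (B⁻¹).IsHermitian := hB.inv.1
  have h1 : toEuclideanLin B⁻¹ (toEuclideanLin B d) = d := toEuclideanLin_inv_apply hB d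
  simp only [quadF, map_sub, LinearMap.map_smul, inner_sub_left, inner_sub_right,
    real_inner_smul_left, real_inner_smul_right, h1]
  have h6 : ⟪toEuclideanLin B⁻¹ r, toEuclideanLin B d⟫ = ⟪r, d⟫ := by
    rw [toEuclideanLin_symm hinv, h1]
  have h7 : ⟪(toEuclideanLin B) d, (toEuclideanLin B⁻¹) r⟫ = ⟪r, d⟫ := by
    rw [real_inner_comm]; exact h6
  have h8 : ⟪(toEuclideanLin B) d, d⟫ = ⟪d, (toEuclideanLin B) d⟫ := real_inner_comm _ _
  rw [h7, h8]
  ring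

lemma inner_le_mnorm {n : ℕ} {B : Matrix (Fin n) (Fin n) ℝ} (hB : B.PosDef)
    (r d : Euc n) : ⟪r, d⟫ ≤ MNorm B⁻¹ r * MNorm B d := by
  have hq : 0 ≤ quadF B d := quadF_nonneg hB.posSemidef d
  have hqi : 0 ≤ quadF B⁻¹ r := quadF_nonneg hB.inv.posSemidef r
  have key : ⟪r, d⟫ ^ 2 ≤ quadF B⁻¹ r * quadF B d := by
    rcases eq_or_ne d 0 with rfl | hd
    · have hz : quadF B (0 : Euc n) = 0 := by simp [quadF]
      simp [hz]
    · have hqpos : 0 < quadF B d := quadF_pos hB hd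
      have hqne : quadF B d ≠ 0 := ne_of_gt hqpos
      set p : ℝ := ⟪r, d⟫ with hp
      have h0 : 0 ≤ quadF B⁻¹ (r - (p / quadF B d) • (toEuclideanLin B d)) :=
        quadF_nonneg hB.inv.posSemidef _
      rw [quadF_expand hB] at h0
      have e2 : (p / quadF B d) ^ 2 * quadF B d = p ^ 2 / quadF B d := by
        field_simp
      have e1 : 2 * (p / quadF B d) * p = 2 * (p ^ 2 / quadF B d) := by
        field_simp
      rw [← hp, e1, e2] at h0
      have h0' : p ^ 2 / quadF B d ≤ quadF B⁻¹ r := by linarith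
      exact (div_le_iff₀ hqpos).1 h0'
  calc ⟪r, d⟫ ≤ |⟪r, d⟫| := le_abs_self _
    _ = Real.sqrt (⟪r, d⟫ ^ 2) := (Real.sqrt_sq_eq_abs _).symm
    _ ≤ Real.sqrt (quadF B⁻¹ r * quadF B d) := Real.sqrt_le_sqrt key
    _ = MNorm B⁻¹ r * MNorm B d := by rw [MNorm, MNorm, Real.sqrt_mul hqi]

lemma curve_deriv {n : ℕ} (g : Euc n → ℝ) (g' : Euc n → Euc n)
    (hg : ∀ y : Euc n, HasGradientAt g (g' y) y) (x d : Euc n) (t : ℝ) :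
    HasDerivAt (fun s : ℝ => g (x + s • d)) ⟪g' (x + t • d), d⟫ t := by
  have hc : HasDerivAt (fun s : ℝ => x + s • d) d t := by
    simpa using ((hasDerivAt_id t).smul_const d).const_add x
  have hgf : HasFDerivAt g (InnerProductSpace.toDual ℝ (Euc n) (g' (x + t • d))) (x + t • d) :=
    (hg (x + t • d)).hasFDerivAt
  have := hgf.comp_hasDerivAt t hc
  simpa [InnerProductSpace.toDual_apply_apply, Function.comp_def] using this

lemma descent_lemma {n : ℕ} {L : ℝ} (g : Euc n → ℝ) (g' : Euc n → Euc n)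
    (hg : ∀ y : Euc n, HasGradientAt g (g' y) y)
    (hLip : ∀ u v : Euc n, ‖g' u - g' v‖ ≤ L * ‖u - v‖)
    (x d : Euc n) (η : ℝ) (hη : 0 ≤ η) :
    g (x + η • d) ≤ g x + η * ⟪g' x, d⟫ + L / 2 * η ^ 2 * ‖d‖ ^ 2 := by
  set F : ℝ → ℝ := fun t => L / 2 * t ^ 2 * ‖d‖ ^ 2 + t * ⟪g' x, d⟫ - g (x + t • d) with hF
  have hF' : ∀ t : ℝ, HasDerivAt F
      (L * t * ‖d‖ ^ 2 + ⟪g' x, d⟫ - ⟪g' (x + t • d), d⟫) t := by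
    intro t
    have h1 : HasDerivAt (fun t : ℝ => L / 2 * t ^ 2 * ‖d‖ ^ 2 + t * ⟪g' x, d⟫)
        (L * t * ‖d‖ ^ 2 + ⟪g' x, d⟫) t := by
      have : HasDerivAt (fun t : ℝ => L / 2 * t ^ 2 * ‖d‖ ^ 2) (L * t * ‖d‖ ^ 2) t := by
        have := ((hasDerivAt_pow 2 t).const_mul (L / 2)).mul_const (‖d‖ ^ 2)
        exact this.congr_deriv (by ring)
      simpa [Pi.add_def] using this.add ((hasDerivAt_id t).mul_const ⟪g' x, d⟫)
    exact h1.sub (curve_deriv g g' hg x d t)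
  have hmono : MonotoneOn F (Set.Icc 0 η) := by
    apply monotoneOn_of_deriv_nonneg (convex_Icc 0 η)
    · exact Continuous.continuousOn
        (Differentiable.continuous (fun t => (hF' t).differentiableAt))
    · intro t ht
      exact ((hF' t).differentiableAt).differentiableWithinAt
    · intro t ht
      rw [(hF' t).deriv]
      rw [interior_Icc] at ht
      have hle : ⟪g' (x + t • d) - g' x, d⟫ ≤ L * t * ‖d‖ ^ 2 := by
        calc ⟪g' (x + t • d) - g' x, d⟫ ≤ ‖g' (x + t • d) - g' x‖ * ‖d‖ :=
              real_inner_le_norm _ _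
          _ ≤ (L * ‖(x + t • d) - x‖) * ‖d‖ := by
              apply mul_le_mul_of_nonneg_right (hLip _ _) (norm_nonneg _)
          _ = L * (|t| * ‖d‖) * ‖d‖ := by rw [add_sub_cancel_left, norm_smul]; norm_num
          _ = L * t * ‖d‖ ^ 2 := by rw [abs_of_pos ht.1]; ring
      have : ⟪g' (x + t • d), d⟫ - ⟪g' x, d⟫ ≤ L * t * ‖d‖ ^ 2 := by
        rwa [inner_sub_left] at hle
      linarith
  have h0 : F 0 ≤ F η := hmono (Set.left_mem_Icc.2 hη) (Set.right_mem_Icc.2 hη) hη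
  have e0 : F 0 = -g x := by simp [hF]
  have e1 : F η = L / 2 * η ^ 2 * ‖d‖ ^ 2 + η * ⟪g' x, d⟫ - g (x + η • d) := rfl
  rw [e0, e1] at h0
  linarith

set_option maxHeartbeats 1000000 in
/-- the backtracking line-search condition holds for every step size
`0 < η ≤ min{1, (2m/L)θ̄(1 - δ)}`. -/
theorem line_search_condition_holds
    {n : ℕ} (L m θbar δ : ℝ)
    (g : Euc n → ℝ) (g' : Euc n → Euc n)
    (h₁ : Euc n → EReal) (h₂ : Euc n → ℝ)
    (x xp ξ r d : Euc n) (B : Matrix (Fin n) (Fin n) ℝ)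
    (hL : 0 ≤ L)
    (hg : ∀ y : Euc n, HasGradientAt g (g' y) y)
    (hLip : ∀ u v : Euc n, ‖g' u - g' v‖ ≤ L * ‖u - v‖)
    (hprop : ProperF h₁) (hlsc : LowerSemicontinuous h₁) (hconv : EConvexF h₁)
    (hh₂cont : Continuous h₂) (hh₂conv : ConvexOn ℝ Set.univ h₂)
    (hfin : h₁ x ≠ ⊤) (hfinp : h₁ xp ≠ ⊤)
    (hd : d = xp - x)
    (hξ : RSubgradAt h₂ ξ x)
    (hBsymm : B.IsSymm)
    (hm : 0 < m)
    (hBlow : ∀ u : Euc n, m * ‖u‖ ^ 2 ≤ quadF B u)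
    (hθbar0 : 0 < θbar) (hθbar1 : θbar ≤ 1)
    (hδ0 : 0 < δ) (hδ1 : δ < 1)
    (hr : ESubgradAt h₁ (r - (g' x - ξ) - (Matrix.toEuclideanLin B) d) xp)
    (hres : MNorm B⁻¹ r ≤ (1 - θbar) * MNorm B d) :
    ∀ η : ℝ, 0 < η → η ≤ min 1 (2 * m / L * θbar * (1 - δ)) →
      fObj g h₁ h₂ (x + η • d) ≤ fObj g h₁ h₂ x +
        ((δ * η * (⟪g' x - ξ, d⟫ + (h₁ xp).toReal - (h₁ x).toReal) : ℝ) : EReal) := by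
  intro η hη hηle
  have hη1 : η ≤ 1 := hηle.trans (min_le_left _ _)
  have hη2 : η ≤ 2 * m / L * θbar * (1 - δ) := hηle.trans (min_le_right _ _)
  rcases eq_or_lt_of_le hL with hL0 | hLpos
  · exfalso
    rw [← hL0] at hη2
    simp at hη2
    linarith
  -- basic data
  set a : ℝ := (h₁ x).toReal with hadef
  set b : ℝ := (h₁ xp).toReal with hbdef
  have ha : h₁ x = (a : EReal) := (EReal.coe_toReal hfin (hprop.1 x)).symm
  have hb : h₁ xp = (b : EReal) := (EReal.coe_toReal hfinp (hprop.1 xp)).symm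
  clear_value a b
  have hBpd : B.PosDef := posdef_of_quad B m hm hBsymm hBlow
  have hq : 0 ≤ quadF B d := quadF_nonneg hBpd.posSemidef d
  -- the key bound C ≤ -θbar * m * ‖d‖²
  set C : ℝ := ⟪g' x - ξ, d⟫ + b - a with hCdef
  clear_value C
  have hCbound : C ≤ -(θbar * (m * ‖d‖ ^ 2)) := by
    -- subgradient inequality at xp evaluated at x
    have hsub := hr x
    have hxd : x - xp = -d := by rw [hd]; abel
    rw [hxd, hb, ha] at hsub
    have hinner : ⟪r - (g' x - ξ) - (Matrix.toEuclideanLin B) d, -d⟫ =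
        -(⟪r, d⟫ - ⟪g' x - ξ, d⟫ - quadF B d) := by
      rw [inner_neg_right, inner_sub_left, inner_sub_left]
      have : ⟪(Matrix.toEuclideanLin B) d, d⟫ = quadF B d := by
        rw [real_inner_comm]; rfl
      rw [this]
    rw [hinner] at hsub
    have hsubR : b + -(⟪r, d⟫ - ⟪g' x - ξ, d⟫ - quadF B d) ≤ a := by
      have := hsub
      rw [show ((b:EReal) + ((-(⟪r, d⟫ - ⟪g' x - ξ, d⟫ - quadF B d) : ℝ) : EReal)) =
        (((b + -(⟪r, d⟫ - ⟪g' x - ξ, d⟫ - quadF B d)) : ℝ) : EReal) by push_cast; ring] at this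
      exact_mod_cast this
    -- Cauchy–Schwarz with the B-norms
    have hrd : ⟪r, d⟫ ≤ (1 - θbar) * quadF B d := by
      have h1 : ⟪r, d⟫ ≤ MNorm B⁻¹ r * MNorm B d := inner_le_mnorm hBpd r d
      have h2 : MNorm B⁻¹ r * MNorm B d ≤ ((1 - θbar) * MNorm B d) * MNorm B d :=
        mul_le_mul_of_nonneg_right hres (Real.sqrt_nonneg _)
      have h3 : MNorm B d * MNorm B d = quadF B d := Real.mul_self_sqrt hq
      calc ⟪r, d⟫ ≤ MNorm B⁻¹ r * MNorm B d := h1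
        _ ≤ ((1 - θbar) * MNorm B d) * MNorm B d := h2
        _ = (1 - θbar) * quadF B d := by rw [mul_assoc, h3]
    have hquad : θbar * (m * ‖d‖ ^ 2) ≤ θbar * quadF B d :=
      mul_le_mul_of_nonneg_left (hBlow d) hθbar0.le
    linarith
  -- descent lemma, h₂ subgradient, h₁ convexity
  have hdesc : g (x + η • d) ≤ g x + η * ⟪g' x, d⟫ + L / 2 * η ^ 2 * ‖d‖ ^ 2 :=
    descent_lemma g g' hg hLip x d η hη.le
  have hh2 : h₂ x + η * ⟪ξ, d⟫ ≤ h₂ (x + η • d) := by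
    have h := hξ (x + η • d)
    rwa [show x + η • d - x = η • d by abel, real_inner_smul_right] at h
  have hh1 : h₁ (x + η • d) ≤ (((1 - η) * a + η * b : ℝ) : EReal) := by
    have hcv := hconv x xp (1 - η) η (by linarith) hη.le (by ring)
    have hpt : (1 - η) • x + η • xp = x + η • d := by
      rw [hd]; module
    rw [hpt, ha, hb] at hcv
    calc h₁ (x + η • d) ≤ ((1 - η : ℝ) : EReal) * ((a : ℝ) : EReal) +
          ((η : ℝ) : EReal) * ((b : ℝ) : EReal) := hcv
      _ = (((1 - η) * a + η * b : ℝ) : EReal) := by push_cast; ring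
  -- the main real inequality
  have hreal : g (x + η • d) + ((1 - η) * a + η * b) - h₂ (x + η • d) ≤
      (g x + a - h₂ x) + δ * η * C := by
    have hinnerG : ⟪g' x - ξ, d⟫ = ⟪g' x, d⟫ - ⟪ξ, d⟫ := inner_sub_left _ _ _
    -- step-size arithmetic
    have k1 : L / 2 * η * ‖d‖ ^ 2 ≤ (1 - δ) * θbar * m * ‖d‖ ^ 2 := by
      have hηL : η * L ≤ 2 * m * θbar * (1 - δ) := by
        have h' : η ≤ (2 * m * θbar * (1 - δ)) / L := by
          rw [div_eq_mul_inv]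
          calc η ≤ 2 * m / L * θbar * (1 - δ) := hη2
            _ = 2 * m * θbar * (1 - δ) * L⁻¹ := by field_simp
        calc η * L ≤ ((2 * m * θbar * (1 - δ)) / L) * L :=
              mul_le_mul_of_nonneg_right h' hLpos.le
          _ = 2 * m * θbar * (1 - δ) := by field_simp
      linarith [mul_le_mul_of_nonneg_right hηL (sq_nonneg ‖d‖)]
    have k3 : η * C ≤ η * (-(θbar * (m * ‖d‖ ^ 2))) :=
      mul_le_mul_of_nonneg_left hCbound hη.le
    have k5 : (1 - δ) * (η * C) ≤ (1 - δ) * (η * (-(θbar * (m * ‖d‖ ^ 2)))) :=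
      mul_le_mul_of_nonneg_left k3 (by linarith)
    have k4 : (L / 2 * η * ‖d‖ ^ 2) * η ≤ ((1 - δ) * θbar * m * ‖d‖ ^ 2) * η :=
      mul_le_mul_of_nonneg_right k1 hη.le
    have hstep : η * C + L / 2 * η ^ 2 * ‖d‖ ^ 2 ≤ δ * η * C := by nlinarith [k4, k5]
    rw [hCdef] at hstep ⊢
    rw [hinnerG] at hstep ⊢
    linarith
  -- conclude in EReal
  have hfinal : fObj g h₁ h₂ (x + η • d) ≤ (((g x + a - h₂ x) + δ * η * C : ℝ) : EReal) := by
    calc fObj g h₁ h₂ (x + η • d)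
        = ((g (x + η • d) : ℝ) : EReal) + h₁ (x + η • d) - ((h₂ (x + η • d) : ℝ) : EReal) := rfl
      _ ≤ ((g (x + η • d) : ℝ) : EReal) + (((1 - η) * a + η * b : ℝ) : EReal) -
            ((h₂ (x + η • d) : ℝ) : EReal) :=
          EReal.sub_le_sub (add_le_add_right hh1 _) le_rfl
      _ = ((g (x + η • d) + ((1 - η) * a + η * b) - h₂ (x + η • d) : ℝ) : EReal) := by
          push_cast; ring
      _ ≤ (((g x + a - h₂ x) + δ * η * C : ℝ) : EReal) := by exact_mod_cast hreal
  have hrhs : fObj g h₁ h₂ x +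
      ((δ * η * (⟪g' x - ξ, d⟫ + b - a) : ℝ) : EReal) =
      (((g x + a - h₂ x) + δ * η * C : ℝ) : EReal) := by
    rw [fObj, ha, hCdef]
    norm_cast
  rw [hCdef, hrhs]
  exact hfinal
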